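/- Under the stated real hypotheses, for every 1 ≤ r ≤ N+1 the polynomial c_r(q) has exactly r distinct real roots s_1^{(r)} < s_2^{(r)} < ⋯ < s_r^{(r)}, and these roots strictly interlace with those of c_{r−1}: for every 2 ≤ r ≤ N+1 and every 1 ≤ i ≤ r−1 one has s_i^{(r)} < s_i^{(r−1)} < s_{i+1}^{(r)}. -/

import Mathlib

open Polynomial Finset Filter

private lemma root_between {p : Polynomial ℝ} {a b : ℝ} (hab : a < b)
    (h : p.eval a * p.eval b < 0) : ∃ x, a < x ∧ x < b ∧ p.eval x = 0 := by
  rcases lt_or_ge (p.eval a) 0 with ha | ha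
  · have hb : 0 < p.eval b := by nlinarith
    obtain ⟨x, hx, hx0⟩ := intermediate_value_Ioo hab.le
      (p.continuous.continuousOn (s := Set.Icc a b)) (Set.mem_Ioo.2 ⟨ha, hb⟩)
    exact ⟨x, hx.1, hx.2, hx0⟩
  · have ha' : 0 < p.eval a := by
      rcases ha.lt_or_eq with h' | h'
      · exact h'
      · exfalso; rw [← h'] at h; simp at h
    have hb : p.eval b < 0 := by nlinarith
    obtain ⟨x, hx, hx0⟩ := intermediate_value_Ioo' hab.le
      (p.continuous.continuousOn (s := Set.Icc a b)) (Set.mem_Ioo.2 ⟨hb, ha'⟩)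
    exact ⟨x, hx.1, hx.2, hx0⟩

private lemma prod_neg_sign {ι : Type*} {s : Finset ι} {f : ι → ℝ} (h : ∀ i ∈ s, f i < 0) :
    0 < (-1)^s.card * ∏ i ∈ s, f i := by
  have h1 : ∏ i ∈ s, f i = (-1)^s.card * ∏ i ∈ s, (-f i) := by
    rw [← Finset.prod_const, ← Finset.prod_mul_distrib]
    exact Finset.prod_congr rfl (fun i _ => by ring)
  have h2 : (0:ℝ) < ∏ i ∈ s, (-f i) := Finset.prod_pos (fun i hi => by linarith [h i hi])
  rw [h1, ← mul_assoc, ← pow_add]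
  have : (-1:ℝ)^(s.card + s.card) = 1 := Even.neg_one_pow ⟨s.card, rfl⟩
  rw [this, one_mul]; exact h2

private lemma prod_sign_count {r k : ℕ} (hk : k ≤ r) {t : ℕ → ℝ} {x : ℝ}
    (hlt : ∀ i, i < k → t i < x) (hgt : ∀ i, k ≤ i → i < r → x < t i) :
    0 < (-1)^(r - k) * ∏ i ∈ Finset.range r, (x - t i) := by
  rw [← Finset.prod_range_mul_prod_Ico _ hk]
  have hA : (0:ℝ) < ∏ i ∈ Finset.range k, (x - t i) :=
    Finset.prod_pos (fun i hi => by have := hlt i (Finset.mem_range.1 hi); linarith)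
  have hB : 0 < (-1:ℝ)^((Finset.Ico k r).card) * ∏ i ∈ Finset.Ico k r, (x - t i) :=
    prod_neg_sign (fun i hi => by
      obtain ⟨h1, h2⟩ := Finset.mem_Ico.1 hi
      have := hgt i h1 h2; linarith)
  rw [Nat.card_Ico] at hB
  calc (0:ℝ) < (∏ i ∈ Finset.range k, (x - t i)) * ((-1)^(r-k) * ∏ i ∈ Finset.Ico k r, (x - t i)) :=
        mul_pos hA hB
    _ = (-1)^(r-k) * ((∏ i ∈ Finset.range k, (x - t i)) * ∏ i ∈ Finset.Ico k r, (x - t i)) := by ring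

private lemma opp_sign {a b : ℝ} {k : ℕ} (h1 : 0 < a * (-1)^k) (h2 : 0 < b * (-1)^(k+1)) :
    a * b < 0 := by
  have hs : ((-1:ℝ)^k) * ((-1)^k) = 1 := by rw [← mul_pow]; norm_num
  rw [pow_succ] at h2
  nlinarith [mul_pos h1 h2]

private lemma sign_transfer {e K s : ℝ} (h1 : 0 < e * K) (h2 : 0 < K * s) : 0 < e * s := by
  nlinarith [mul_pos h1 h2, sq_nonneg K]

private lemma fact_natDegree {L : ℝ} (hL : L ≠ 0) (r : ℕ) (t : ℕ → ℝ) :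
    (Polynomial.C L * ∏ i ∈ Finset.range r, (X - Polynomial.C (t i))).natDegree = r := by
  rw [natDegree_C_mul hL, natDegree_prod_of_monic _ _ (fun i _ => monic_X_sub_C _)]
  simp [natDegree_X_sub_C]

private lemma fact_coeff (L : ℝ) (r : ℕ) (t : ℕ → ℝ) :
    (Polynomial.C L * ∏ i ∈ Finset.range r, (X - Polynomial.C (t i))).coeff r = L := by
  have hm : (∏ i ∈ Finset.range r, (X - Polynomial.C (t i))).Monic :=
    monic_prod_of_monic _ _ (fun i _ => monic_X_sub_C _)
  have hd : (∏ i ∈ Finset.range r, (X - Polynomial.C (t i))).natDegree = r := by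
    rw [natDegree_prod_of_monic _ _ (fun i _ => monic_X_sub_C _)]; simp [natDegree_X_sub_C]
  have h1 := hm.coeff_natDegree
  rw [hd] at h1
  rw [coeff_C_mul, h1, mul_one]

private lemma step_lemma {p q pnew : Polynomial ℝ} {E D b L M : ℝ} {m : ℕ}
    {t u : ℕ → ℝ}
    (hE : E < 0) (hD : D < 0)
    (hrec : Polynomial.C E * pnew
      = Polynomial.C (-D) * p + (Polynomial.C b + Polynomial.X) * q)
    (hp : p = Polynomial.C L * ∏ i ∈ Finset.range m, (X - Polynomial.C (t i)))
    (hq : q = Polynomial.C M * ∏ i ∈ Finset.range (m+1), (X - Polynomial.C (u i)))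
    (hL : 0 < L * (-1)^m) (hM : 0 < M * (-1)^(m+1))
    (humono : ∀ i j, i < j → j < m+1 → u i < u j)
    (hint : ∀ i, i < m → u i < t i ∧ t i < u (i+1)) :
    ∃ (K : ℝ) (v : ℕ → ℝ),
      pnew = Polynomial.C K * ∏ i ∈ Finset.range (m+2), (X - Polynomial.C (v i)) ∧
      0 < K * (-1)^(m+2) ∧
      (∀ i j, i < j → j < m+2 → v i < v j) ∧
      (∀ i, i < m+1 → v i < u i ∧ u i < v (i+1)) := by
  have hE0 : E ≠ 0 := ne_of_lt hE
  have hL0 : L ≠ 0 := by intro h; rw [h] at hL; simp at hL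
  have hM0 : M ≠ 0 := by intro h; rw [h] at hM; simp at hM
  have hpd : p.natDegree = m := by rw [hp]; exact fact_natDegree hL0 m t
  have hqd : q.natDegree = m + 1 := by rw [hq]; exact fact_natDegree hM0 (m+1) u
  have hqc : q.coeff (m+1) = M := by rw [hq]; exact fact_coeff M (m+1) u
  -- coefficient of pnew at m+2
  have hrec' : Polynomial.C E * pnew
      = Polynomial.C (-D) * p + (Polynomial.C b * q + Polynomial.X * q) := by rw [hrec]; ring
  have hco : E * pnew.coeff (m+2) = M := by
    have h := congrArg (fun r : Polynomial ℝ => r.coeff (m+2)) hrec'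
    simp only [coeff_C_mul, coeff_add, coeff_X_mul] at h
    rw [coeff_eq_zero_of_natDegree_lt (by omega : p.natDegree < m+2),
        coeff_eq_zero_of_natDegree_lt (by omega : q.natDegree < m+2), hqc] at h
    simpa using h
  have hKne : pnew.coeff (m+2) = M / E := by
    field_simp
    linarith [hco]
  set K : ℝ := M / E with hKdef
  have hK0 : K ≠ 0 := div_ne_zero hM0 hE0
  have hKsign : 0 < K * (-1)^(m+2) := by
    have hEinv : E⁻¹ < 0 := inv_lt_zero.mpr hE
    calc (0:ℝ) < (M * (-1)^(m+1)) * (-E⁻¹) := mul_pos hM (by linarith)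
      _ = K * (-1)^(m+2) := by rw [hKdef, div_eq_mul_inv]; ring
  have hND : pnew.natDegree = m + 2 := by
    refine le_antisymm ?_ (le_natDegree_of_ne_zero (by rw [hKne]; exact hK0))
    have h1 : (Polynomial.C E * pnew).natDegree = pnew.natDegree := natDegree_C_mul hE0
    rw [← h1, hrec]
    refine le_trans (natDegree_add_le _ _) (max_le ?_ ?_)
    · exact le_trans natDegree_mul_le (by simp [natDegree_C, hpd])
    · refine le_trans natDegree_mul_le ?_
      have h2 : (Polynomial.C b + Polynomial.X).natDegree = 1 := by
        rw [add_comm]; exact natDegree_X_add_C b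
      rw [h2, hqd]
      omega
  have hlead : pnew.leadingCoeff = K := by rw [leadingCoeff, hND, hKne]
  have hpne : pnew ≠ 0 := by
    intro h
    rw [h] at hco; simp at hco; exact hM0 hco.symm
  -- evaluation identity
  have heval : ∀ x : ℝ, E * pnew.eval x
      = -D * (L * ∏ i ∈ Finset.range m, (x - t i))
        + (b + x) * (M * ∏ i ∈ Finset.range (m+1), (x - u i)) := by
    intro x
    have h := congrArg (fun r : Polynomial ℝ => r.eval x) hrec
    simp only [hp, hq, eval_mul, eval_add, eval_C, eval_X, eval_prod, eval_sub] at h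
    linarith [h]
  -- sign at the roots of q
  have hsign : ∀ j, j ≤ m → 0 < pnew.eval (u j) * (-1)^(j+1) := by
    intro j hj
    have hprodz : ∏ i ∈ Finset.range (m+1), (u j - u i) = 0 :=
      Finset.prod_eq_zero (i := j) (Finset.mem_range.2 (by omega)) (by simp)
    have he := heval (u j)
    rw [hprodz] at he
    have he' : E * pnew.eval (u j) = -D * (L * ∏ i ∈ Finset.range m, (u j - t i)) := by
      rw [he]; ring
    have hPs : 0 < (-1:ℝ)^(m - j) * ∏ i ∈ Finset.range m, (u j - t i) := by
      apply prod_sign_count hj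
      · intro i hi
        have h1 : t i < u (i+1) := (hint i (by omega)).2
        rcases eq_or_lt_of_le (Nat.succ_le_of_lt hi) with h2 | h2
        · rw [← h2]; exact h1
        · exact h1.trans (humono (i+1) j h2 (by omega))
      · intro i h1 h2
        have h3 : u i < t i := (hint i h2).1
        rcases eq_or_lt_of_le h1 with h4 | h4
        · rw [h4]; exact h3
        · exact (humono j i h4 (by omega)).trans h3
    set P := ∏ i ∈ Finset.range m, (u j - t i) with hP
    set y := pnew.eval (u j) with hy
    have hbc : (-1:ℝ)^(m-j) * (-1)^j = (-1)^m := pow_sub_mul_pow (-1:ℝ) hj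
    have hbb : ((-1:ℝ)^(m-j)) * ((-1)^(m-j)) = 1 := by rw [← mul_pow]; norm_num
    have h5 : 0 < (L * P) * ((-1:ℝ)^m * (-1)^(m-j)) := by
      calc (0:ℝ) < (L * (-1)^m) * ((-1)^(m-j) * P) := mul_pos hL hPs
        _ = (L*P) * ((-1)^m * (-1)^(m-j)) := by ring
    have h6 : 0 < (E * y) * ((-1:ℝ)^m * (-1)^(m-j)) := by
      calc (0:ℝ) < (-D) * ((L*P) * ((-1:ℝ)^m * (-1)^(m-j))) := mul_pos (by linarith) h5
        _ = (E * y) * ((-1:ℝ)^m * (-1)^(m-j)) := by rw [he']; ring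
    have h7 : y * ((-1:ℝ)^m * (-1)^(m-j)) < 0 := by nlinarith [h6]
    have hs : ((-1:ℝ)^m * (-1)^(m-j)) = (-1)^j := by
      calc ((-1:ℝ)^m * (-1)^(m-j)) = ((-1:ℝ)^(m-j) * (-1)^j) * (-1)^(m-j) := by rw [hbc]
        _ = (-1)^j * (((-1:ℝ)^(m-j)) * ((-1)^(m-j))) := by ring
        _ = (-1)^j := by rw [hbb, mul_one]
    rw [hs] at h7
    calc (0:ℝ) < -(y * (-1)^j) := by linarith
      _ = y * (-1)^(j+1) := by rw [pow_succ]; ring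
  -- right endpoint
  have hdegpos : 0 < pnew.degree := natDegree_pos_iff_degree_pos.1 (by omega)
  have hq1 : Filter.Tendsto (fun x => (Polynomial.C K⁻¹ * pnew).eval x) atTop atTop := by
    apply Polynomial.tendsto_atTop_of_leadingCoeff_nonneg
    · have : (Polynomial.C K⁻¹ * pnew).natDegree = m + 2 := by
        rw [natDegree_C_mul (inv_ne_zero hK0), hND]
      exact natDegree_pos_iff_degree_pos.1 (by omega)
    · rw [leadingCoeff_mul, leadingCoeff_C, hlead, inv_mul_cancel₀ hK0]; norm_num
  obtain ⟨x0, hx0pos, hx0gt⟩ := ((hq1.eventually_gt_atTop 0).and (eventually_gt_atTop (u m))).exists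
  have hx0sign : 0 < pnew.eval x0 * K := by
    have h1 : 0 < K⁻¹ * pnew.eval x0 := by simpa [eval_mul] using hx0pos
    have h2 : (K⁻¹ * pnew.eval x0) * (K * K) = pnew.eval x0 * K := by
      field_simp
    nlinarith [mul_pos h1 (mul_self_pos.mpr hK0)]
  -- left endpoint
  have hcompdeg : (pnew.comp (-X)).natDegree = m+2 := by
    rw [natDegree_comp]; simp [hND]
  have hcomplead : (pnew.comp (-X)).leadingCoeff = K * (-1)^(m+2) := by
    rw [leadingCoeff_comp (by simp), hlead, hND]
    simp [leadingCoeff_neg, leadingCoeff_X]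
  set K2 : ℝ := K * (-1:ℝ)^(m+2) with hK2def
  have hK2pos : 0 < K2 := hKsign
  have hq2 : Filter.Tendsto (fun x => (Polynomial.C K2⁻¹ * (pnew.comp (-X))).eval x) atTop atTop := by
    apply Polynomial.tendsto_atTop_of_leadingCoeff_nonneg
    · have : (Polynomial.C K2⁻¹ * (pnew.comp (-X))).natDegree = m + 2 := by
        rw [natDegree_C_mul (inv_ne_zero (ne_of_gt hK2pos)), hcompdeg]
      exact natDegree_pos_iff_degree_pos.1 (by omega)
    · rw [leadingCoeff_mul, leadingCoeff_C, hcomplead,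
        inv_mul_cancel₀ (ne_of_gt hK2pos)]
      norm_num
  obtain ⟨x1', hx1pos', hx1gt'⟩ :=
    ((hq2.eventually_gt_atTop 0).and (eventually_gt_atTop (-(u 0)))).exists
  set x1 : ℝ := -x1' with hx1def
  have hx1lt : x1 < u 0 := by rw [hx1def]; linarith
  have hx1pos : 0 < pnew.eval x1 := by
    have h1 : 0 < K2⁻¹ * pnew.eval x1 := by
      have := hx1pos'
      simp only [eval_mul, eval_C, eval_comp, eval_neg, eval_X] at this
      rw [hx1def]
      exact this
    nlinarith [mul_pos h1 hK2pos, inv_pos.mpr hK2pos]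
  -- construct the roots by IVT
  have hroot : ∀ j : ℕ, ∃ x : ℝ, j < m+2 →
      ((if j = 0 then x1 else u (j-1)) < x ∧ x < (if j = m+1 then x0 else u j)
        ∧ pnew.eval x = 0) := by
    intro j
    by_cases hj : j < m+2
    · rcases Nat.eq_zero_or_pos j with h0 | h0
      · subst h0
        have hne : (0:ℕ) ≠ m+1 := by omega
        have hu0 : pnew.eval (u 0) < 0 := by
          have := hsign 0 (by omega)
          simpa using this
        obtain ⟨x, hxa, hxb, hxc⟩ := root_between hx1lt
          (mul_neg_of_pos_of_neg hx1pos hu0)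
        exact ⟨x, fun _ => by rw [if_pos rfl, if_neg hne]; exact ⟨hxa, hxb, hxc⟩⟩
      · rcases Nat.lt_or_ge j (m+1) with hjm | hjm
        · -- 1 ≤ j ≤ m : between u (j-1) and u j
          have hjj : j - 1 + 1 = j := by omega
          have hlt : u (j-1) < u j := humono (j-1) j (by omega) (by omega)
          have h1 : 0 < pnew.eval (u (j-1)) * (-1:ℝ)^j := by
            have := hsign (j-1) (by omega); rw [hjj] at this; exact this
          have h2 : 0 < pnew.eval (u j) * (-1:ℝ)^(j+1) := hsign j (by omega)
          obtain ⟨x, hxa, hxb, hxc⟩ := root_between hlt (opp_sign h1 h2)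
          exact ⟨x, fun _ => by
            rw [if_neg (by omega : j ≠ 0), if_neg (by omega : j ≠ m+1)]
            exact ⟨hxa, hxb, hxc⟩⟩
        · -- j = m+1 : between u m and x0
          have hjeq : j = m + 1 := by omega
          subst hjeq
          have h1 : 0 < pnew.eval (u m) * (-1:ℝ)^(m+1) := hsign m le_rfl
          have h2 : 0 < pnew.eval x0 * (-1:ℝ)^(m+2) := sign_transfer hx0sign hKsign
          obtain ⟨x, hxa, hxb, hxc⟩ := root_between hx0gt (opp_sign h1 h2)
          exact ⟨x, fun _ => by
            rw [if_neg (by omega : m+1 ≠ 0), if_pos rfl]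
            have : m + 1 - 1 = m := by omega
            rw [this]
            exact ⟨hxa, hxb, hxc⟩⟩
    · exact ⟨0, fun h => absurd h hj⟩
  choose v hv using hroot
  -- monotonicity
  have hvmono : ∀ i j, i < j → j < m+2 → v i < v j := by
    intro i j hij hj
    have hvi := hv i (by omega)
    have hvj := hv j (by omega)
    rw [if_neg (by omega : i ≠ m+1)] at hvi
    rw [if_neg (by omega : j ≠ 0)] at hvj
    have hle : u i ≤ u (j-1) := by
      rcases eq_or_lt_of_le (by omega : i ≤ j - 1) with h | h
      · rw [h]
      · exact (humono i (j-1) h (by omega)).le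
    have h1 := hvi.2.1
    have h2 := hvj.1
    by_cases hi0 : i = 0
    · linarith
    · linarith
  have hvroot : ∀ j, j < m+2 → pnew.eval (v j) = 0 := fun j hj => (hv j hj).2.2
  -- the multiset of roots
  have hms : Multiset.map v (Finset.range (m+2)).val = pnew.roots := by
    apply Multiset.eq_of_le_of_card_le
    · rw [Multiset.le_iff_subset]
      · intro a ha
        obtain ⟨j, hj, rfl⟩ := Multiset.mem_map.1 ha
        have hjm : j < m+2 := Finset.mem_range.1 (Finset.mem_def.2 hj)
        exact (mem_roots').2 ⟨hpne, hvroot j hjm⟩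
      · refine Multiset.Nodup.map_on ?_ (Finset.range (m+2)).nodup
        intro x hx y hy hxy
        have hx' : x < m+2 := Finset.mem_range.1 (Finset.mem_def.2 hx)
        have hy' : y < m+2 := Finset.mem_range.1 (Finset.mem_def.2 hy)
        by_contra hne
        rcases lt_or_gt_of_ne hne with h | h
        · exact absurd hxy (ne_of_lt (hvmono x y h hy'))
        · exact absurd hxy.symm (ne_of_lt (hvmono y x h hx'))
    · rw [Multiset.card_map]
      calc Multiset.card pnew.roots ≤ pnew.natDegree := Polynomial.card_roots' pnew
        _ = m + 2 := hND
        _ = Multiset.card (Finset.range (m+2)).val := by simp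
  have hcard : Multiset.card pnew.roots = pnew.natDegree := by
    rw [← hms, Multiset.card_map, hND]; simp
  have hfact : pnew = Polynomial.C K * ∏ i ∈ Finset.range (m+2), (X - Polynomial.C (v i)) := by
    have h := Polynomial.C_leadingCoeff_mul_prod_multiset_X_sub_C (p := pnew) hcard
    rw [hlead, ← hms, Multiset.map_map] at h
    rw [← h, Finset.prod_eq_multiset_prod]
    rfl
  -- interlacing
  have hint' : ∀ i, i < m+1 → v i < u i ∧ u i < v (i+1) := by
    intro i hi
    have hvi := hv i (by omega)
    have hvi1 := hv (i+1) (by omega)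
    rw [if_neg (by omega : i ≠ m+1)] at hvi
    rw [if_neg (by omega : i+1 ≠ 0)] at hvi1
    have h1 := hvi.2.1
    have h2 := hvi1.1
    have hii : i + 1 - 1 = i := by omega
    rw [hii] at h2
    exact ⟨h1, h2⟩
  exact ⟨K, v, hfact, hKsign, hvmono, hint'⟩

/-- For every `1 ≤ r ≤ N+1`, the polynomial `c r` has exactly `r`
distinct real roots `s r 1 < s r 2 < ⋯ < s r r`, and the roots of consecutive
polynomials strictly interlace: `s r i < s (r-1) i < s r (i+1)`. -/
theorem heun_coeff_roots_interlace
    (N : ℕ) (γ1 γ2 γ3 t1 t2 t3 α β : ℝ)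
    (ht12 : t1 ≠ t2) (ht13 : t1 ≠ t3) (ht23 : t2 ≠ t3)
    (hγ3 : 0 < γ3)
    (hsum : 1 < γ1 + γ2 + γ3 + N)
    (hprod : (t1 - t3) * (t2 - t3) < 0)
    (hαβ : ({α, β} : Set ℝ) = ({-(N : ℝ), γ1 + γ2 + γ3 + (N : ℝ) - 1} : Set ℝ))
    (c : ℕ → Polynomial ℝ)
    (hc0 : c 0 = 1)
    (hc1 : Polynomial.C ((t1 - t3) * (t2 - t3) * γ3) * c 1 = Polynomial.X * c 0)
    (hrec : ∀ m : ℕ,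
      Polynomial.C ((t1 - t3) * (t2 - t3) * ((m : ℝ) + 2) * ((m : ℝ) + 1 + γ3)) * c (m + 2)
        = Polynomial.C (-(((m : ℝ) + α) * ((m : ℝ) + β))) * c m
          + (Polynomial.C (((m : ℝ) + 1) * (((m : ℝ) + γ3) * (t1 + t2 - 2 * t3)
                + (t2 - t3) * γ1 + (t1 - t3) * γ2)) + Polynomial.X) * c (m + 1))
    : ∃ s : ℕ → ℕ → ℝ,
      (∀ r : ℕ, 1 ≤ r → r ≤ N + 1 →
        (∀ i j : ℕ, 1 ≤ i → i < j → j ≤ r → s r i < s r j) ∧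
        (∀ i : ℕ, 1 ≤ i → i ≤ r → (c r).eval (s r i) = 0) ∧
        (∀ x : ℝ, (c r).eval x = 0 → ∃ i : ℕ, 1 ≤ i ∧ i ≤ r ∧ x = s r i)) ∧
      (∀ r : ℕ, 2 ≤ r → r ≤ N + 1 → ∀ i : ℕ, 1 ≤ i → i ≤ r - 1 →
        s r i < s (r - 1) i ∧ s (r - 1) i < s r (i + 1)) := by
  classical
  set S' : ℝ := γ1 + γ2 + γ3 + (N : ℝ) - 1 with hS'
  have hS'pos : 0 < S' := by rw [hS']; linarith
  -- a usable form of the {α, β} hypothesis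
  have hab : ∀ x : ℝ, (x + α) * (x + β) = (x - (N:ℝ)) * (x + S') := by
    have hmem1 : α ∈ ({-(N:ℝ), S'} : Set ℝ) := by
      rw [← hαβ]; exact Set.mem_insert _ _
    have hmem2 : -(N:ℝ) ∈ ({α, β} : Set ℝ) := by rw [hαβ]; exact Set.mem_insert _ _
    have hmem3 : S' ∈ ({α, β} : Set ℝ) := by
      rw [hαβ]; exact Set.mem_insert_iff.2 (Or.inr rfl)
    simp only [Set.mem_insert_iff, Set.mem_singleton_iff] at hmem1 hmem2 hmem3
    have hNne : S' ≠ -(N:ℝ) := by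
      have : (0:ℝ) ≤ N := Nat.cast_nonneg N
      intro h; rw [h] at hS'pos; linarith
    rcases hmem1 with hα | hα
    · rcases hmem3 with h3 | h3
      · exact absurd (h3.trans hα) hNne
      · intro x; rw [hα, ← h3]; ring
    · rcases hmem2 with h2 | h2
      · exact absurd (hα.symm.trans h2.symm) hNne
      · intro x; rw [hα, ← h2]; ring
  -- the inductive construction
  have main : ∀ n : ℕ, n ≤ N + 1 → ∃ (s : ℕ → ℕ → ℝ) (L : ℕ → ℝ),
      (∀ r, r ≤ n → (0 < L r * (-1)^r ∧ (∀ i j, i < j → j < r → s r i < s r j) ∧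
        c r = Polynomial.C (L r) * ∏ i ∈ Finset.range r, (X - Polynomial.C (s r i)))) ∧
      (∀ r, r + 1 ≤ n → ∀ i, i < r → s (r+1) i < s r i ∧ s r i < s (r+1) (i+1)) := by
    intro n
    induction n with
    | zero =>
      intro _
      refine ⟨fun _ _ => 0, fun _ => 1, ?_, ?_⟩
      · intro r hr
        have hr0 : r = 0 := by omega
        subst hr0
        refine ⟨by norm_num, fun i j _ hj => absurd hj (Nat.not_lt_zero j), ?_⟩
        simp [hc0]
      · intro r hr; omega
    | succ n ih =>
      intro hn1
      obtain ⟨s, L, hgood, hinter⟩ := ih (by omega)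
      cases n with
      | zero =>
        have hA3 : (t1-t3)*(t2-t3)*γ3 < 0 := mul_neg_of_neg_of_pos hprod hγ3
        have hA30 : (t1-t3)*(t2-t3)*γ3 ≠ 0 := ne_of_lt hA3
        have hc1' : c 1 = Polynomial.C (((t1-t3)*(t2-t3)*γ3)⁻¹)
            * ∏ i ∈ Finset.range 1, (X - Polynomial.C (0:ℝ)) := by
          have h2 : Polynomial.C (((t1-t3)*(t2-t3)*γ3)⁻¹)
              * (Polynomial.C ((t1-t3)*(t2-t3)*γ3) * c 1)
              = Polynomial.C (((t1-t3)*(t2-t3)*γ3)⁻¹) * Polynomial.X := by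
            rw [hc1, hc0, mul_one]
          rw [← mul_assoc, ← C_mul, inv_mul_cancel₀ hA30, C_1, one_mul] at h2
          rw [h2]
          simp [Finset.prod_range_one]
        refine ⟨fun r i => if r = 1 then 0 else s r i,
          fun r => if r = 1 then ((t1-t3)*(t2-t3)*γ3)⁻¹ else L r, ?_, ?_⟩
        · intro r hr
          by_cases hr1 : r = 1
          · subst hr1
            simp only [eq_self_iff_true, if_true]
            refine ⟨?_, fun i j hij hj => by omega, ?_⟩
            · have : ((t1-t3)*(t2-t3)*γ3)⁻¹ < 0 := inv_lt_zero.2 hA3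
              simp only [pow_one]
              linarith
            · exact hc1'
          · have hr0 : r = 0 := by omega
            subst hr0
            simpa only [if_neg hr1] using hgood 0 le_rfl
        · intro r hr i hi
          have hr0 : r = 0 := by omega
          subst hr0
          exact absurd hi (Nat.not_lt_zero i)
      | succ k =>
        obtain ⟨hLk, hmonk, hfk⟩ := hgood k (by omega)
        obtain ⟨hLk1, hmonk1, hfk1⟩ := hgood (k+1) le_rfl
        have h0k : (0:ℝ) ≤ (k:ℝ) := Nat.cast_nonneg k
        have h1 : (0:ℝ) < ((k:ℝ)+2)*((k:ℝ)+1+γ3) := by nlinarith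
        have hEneg : (t1-t3)*(t2-t3)*((k:ℝ)+2)*((k:ℝ)+1+γ3) < 0 := by
          calc (t1-t3)*(t2-t3)*((k:ℝ)+2)*((k:ℝ)+1+γ3)
              = ((t1-t3)*(t2-t3)) * (((k:ℝ)+2)*((k:ℝ)+1+γ3)) := by ring
            _ < 0 := mul_neg_of_neg_of_pos hprod h1
        have hDneg : ((k:ℝ)+α)*((k:ℝ)+β) < 0 := by
          rw [hab]
          apply mul_neg_of_neg_of_pos
          · have hkN : (k:ℝ) < (N:ℝ) := by exact_mod_cast (by omega : k < N)
            linarith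
          · linarith
        obtain ⟨K, v, hfactv, hKsign, hvmono, hintv⟩ :=
          step_lemma hEneg hDneg (hrec k) hfk hfk1 hLk hLk1 hmonk1
            (hinter k le_rfl)
        refine ⟨fun r i => if r = k+2 then v i else s r i,
          fun r => if r = k+2 then K else L r, ?_, ?_⟩
        · intro r hr
          by_cases hr2 : r = k+2
          · subst hr2
            simp only [eq_self_iff_true, if_true]
            exact ⟨hKsign, hvmono, hfactv⟩
          · simpa only [if_neg hr2] using hgood r (by omega)
        · intro r hr i hi
          by_cases hr2 : r + 1 = k+2
          · have hrk : r = k+1 := by omega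
            subst hrk
            simp only [if_pos hr2, if_neg (by omega : k+1 ≠ k+2)]
            exact hintv i hi
          · simp only [if_neg hr2, if_neg (by omega : r ≠ k+2)]
            exact hinter r (by omega) i hi
  -- assembly
  obtain ⟨s0, L0, hgood, hinter⟩ := main (N+1) le_rfl
  refine ⟨fun r i => s0 r (i-1), ?_, ?_⟩
  · intro r hr1 hr2
    obtain ⟨hLs, hmono, hfact⟩ := hgood r hr2
    have hL0 : L0 r ≠ 0 := fun h => by rw [h] at hLs; simp at hLs
    refine ⟨?_, ?_, ?_⟩
    · intro i j hi hij hj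
      exact hmono (i-1) (j-1) (by omega) (by omega)
    · intro i hi1 hi2
      rw [hfact]
      simp only [eval_mul, eval_C, eval_prod, eval_sub, eval_X]
      refine mul_eq_zero_of_right _ ?_
      refine Finset.prod_eq_zero (i := i-1) (Finset.mem_range.2 (by omega)) ?_
      exact sub_self _
    · intro x hx
      rw [hfact] at hx
      simp only [eval_mul, eval_C, eval_prod, eval_sub, eval_X] at hx
      have hprod0 : ∏ i ∈ Finset.range r, (x - s0 r i) = 0 := by
        rcases mul_eq_zero.1 hx with h | h
        · exact absurd h hL0
        · exact h
      obtain ⟨a, ha, hav⟩ := Finset.prod_eq_zero_iff.1 hprod0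
      have haR := Finset.mem_range.1 ha
      refine ⟨a+1, by omega, by omega, ?_⟩
      have : x = s0 r a := by linarith [hav]
      simpa using this
  · intro r hr2 hrN i hi1 hi2
    have h := hinter (r-1) (by omega) (i-1) (by omega)
    have hr1 : r - 1 + 1 = r := by omega
    rw [hr1] at h
    have hii : i - 1 + 1 = i := by omega
    rw [hii] at h
    constructor
    · exact h.1
    · have h2 := h.2
      show s0 (r-1) (i-1) < s0 r (i+1-1)
      have hjj : i + 1 - 1 = i := by omega
      rw [hjj]
      exact h2
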